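/- Let 𝒜 be a null family of pairwise disjoint nonempty compact subsets of a metric space M. Then the associated decomposition of M, consisting of the members of 𝒜 together with all singletons {x} for x ∈ M not lying in any member of 𝒜, is upper semicontinuous. -/

import Mathlib

/-- A decomposition of a space `M`: a partition of `M` into nonempty subsets. -/
def IsDecomposition {M : Type*} (𝒟 : Set (Set M)) : Prop :=
  (∀ D ∈ 𝒟, D.Nonempty) ∧ ∀ x : M, ∃! D, D ∈ 𝒟 ∧ x ∈ D

/-- A decomposition of a Hausdorff space is upper semicontinuous if each member is
compact and, for each member `D` and open `U ⊇ D`, there is an open `V ⊇ D` such that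
every member meeting `V` is contained in `U`. -/
def IsUSCDecomposition {M : Type*} [TopologicalSpace M] (𝒟 : Set (Set M)) : Prop :=
  (∀ D ∈ 𝒟, IsCompact D) ∧
    ∀ D ∈ 𝒟, ∀ U : Set M, IsOpen U → D ⊆ U →
      ∃ V : Set M, IsOpen V ∧ D ⊆ V ∧ ∀ D' ∈ 𝒟, (D' ∩ V).Nonempty → D' ⊆ U

/-- The decomposition of a metric space associated to a null family of pairwise
disjoint nonempty compact subsets (consisting of the members of the family together
with the singletons of the remaining points) is upper semicontinuous. -/
theorem nullFamily_decomposition_usc {M : Type*} [MetricSpace M] (𝒜 : Set (Set M))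
    (hne : ∀ A ∈ 𝒜, A.Nonempty) (hcpt : ∀ A ∈ 𝒜, IsCompact A)
    (hdisj : 𝒜.PairwiseDisjoint id)
    (hnull : ∀ ε : ℝ, 0 < ε → {A ∈ 𝒜 | ε < Metric.diam A}.Finite) :
    IsUSCDecomposition (𝒜 ∪ {S : Set M | ∃ x : M, x ∉ ⋃₀ 𝒜 ∧ S = {x}}) := by
  constructor
  · rintro D (hD | ⟨x, -, rfl⟩)
    · exact hcpt D hD
    · exact isCompact_singleton
  · intro D hD U hU hDU
    have hDc : IsCompact D := by
      rcases hD with hD | ⟨x, -, rfl⟩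
      exacts [hcpt D hD, isCompact_singleton]
    obtain ⟨δ, hδ, hth⟩ := hDc.exists_thickening_subset_open hU hDU
    set F := {A ∈ 𝒜 | δ / 3 < Metric.diam A ∧ ¬ A ⊆ U} with hF
    have hFfin : F.Finite :=
      (hnull (δ / 3) (by positivity)).subset (fun A hA => ⟨hA.1, hA.2.1⟩)
    have hFclosed : IsClosed (⋃₀ F) := by
      rw [Set.sUnion_eq_biUnion]
      exact hFfin.isClosed_biUnion (fun A hA => (hcpt A hA.1).isClosed)
    refine ⟨Metric.thickening (δ / 3) D \ ⋃₀ F,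
      Metric.isOpen_thickening.sdiff hFclosed, ?_, ?_⟩
    · intro x hx
      refine ⟨Metric.self_subset_thickening (by positivity) D hx, ?_⟩
      rintro ⟨A, hA, hxA⟩
      rcases hD with hD | ⟨x', hx', rfl⟩
      · rcases eq_or_ne A D with rfl | hne'
        · exact hA.2.2 hDU
        · exact Set.disjoint_left.mp (hdisj hA.1 hD hne') hxA hx
      · exact hx' ⟨A, hA.1, hx ▸ hxA⟩
    · rintro D' hD' ⟨y, hyD', hyT, hyF⟩
      rw [Metric.mem_thickening_iff] at hyT
      obtain ⟨d, hd, hyd⟩ := hyT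
      rcases hD' with hD' | ⟨x, -, rfl⟩
      · by_cases hsub : D' ⊆ U
        · exact hsub
        · have hdiam : Metric.diam D' ≤ δ / 3 := by
            by_contra h
            exact hyF ⟨D', ⟨hD', lt_of_not_ge h, hsub⟩, hyD'⟩
          intro z hz
          apply hth
          rw [Metric.mem_thickening_iff]
          refine ⟨d, hd, ?_⟩
          calc dist z d ≤ dist z y + dist y d := dist_triangle z y d
            _ ≤ δ / 3 + dist y d :=
              add_le_add_left ((Metric.dist_le_diam_of_mem (hcpt D' hD').isBounded hz
                hyD').trans hdiam) _
            _ < δ / 3 + δ / 3 := by linarith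
            _ < δ := by linarith
      · intro z hz
        rw [Set.mem_singleton_iff] at hz hyD'
        subst hz; subst hyD'
        exact hth (Metric.mem_thickening_iff.mpr ⟨d, hd, by linarith⟩)
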